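/- Let n ≥ 1 and let p = (p_n, p_n', q_n, …, p_1, p_1', q_1) ∈ I_n and t = (t_n, t_n', u_n, …, t_1, t_1', u_1) ∈ I_n satisfy p_i + p_i' = t_i + t_i' and q_i = u_i for all i ∈ {1,…,n}. Then w_{p,j} = w_{t,j} and h_{p,j} = h_{t,j} for all j ≥ 0, and the Perron–Frobenius eigenvalues of M_p and M_t coincide: the spectral radius of M_p equals the spectral radius of M_t (both equal 1/w_{p,n}). -/

import Mathlib

open Matrix

noncomputable section

/-- `M1 = [[1,1,0],[0,1,0],[0,0,1]]`. -/
def M1 : Matrix (Fin 3) (Fin 3) ℝ := !![1, 1, 0; 0, 1, 0; 0, 0, 1]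

/-- `M2 = [[1,0,0],[1,1,1],[0,0,1]]`. -/
def M2 : Matrix (Fin 3) (Fin 3) ℝ := !![1, 0, 0; 1, 1, 1; 0, 0, 1]

/-- `M3 = [[1,0,0],[0,1,0],[0,1,1]]`. -/
def M3 : Matrix (Fin 3) (Fin 3) ℝ := !![1, 0, 0; 0, 1, 0; 0, 1, 1]

/- A tuple `p = (p_n, p_n', q_n, …, p_1, p_1', q_1) ∈ ℕ₀^{3n}` is encoded by three
functions `P P' Q : Fin n → ℕ`, where the index `i : Fin n` corresponds to the
subscript `i + 1` (so `P ⟨0,_⟩ = p_1`, …, `P ⟨n-1,_⟩ = p_n`). -/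

/-- The transition matrix `M_p = M1^{p_n} M3^{p_n'} M2^{q_n} ⋯ M1^{p_1} M3^{p_1'} M2^{q_1}`. -/
def Mp (n : ℕ) (P P' Q : Fin n → ℕ) : Matrix (Fin 3) (Fin 3) ℝ :=
  ((List.finRange n).map fun i => M1 ^ P i.rev * M3 ^ P' i.rev * M2 ^ Q i.rev).prod

/-- Membership of the tuple `p` in `I_n`. -/
def memI (n : ℕ) (P P' Q : Fin n → ℕ) : Prop :=
  (∀ i, 0 < Q i) ∧ (∀ i, 0 < P i + P' i) ∧ (∃ j, 0 < P j) ∧ (∃ k, 0 < P' k)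

/-- Finite continued fraction: `cf [a₁, …, a_m] x = 1/(a₁ + 1/(a₂ + ⋯ + 1/(a_m + x)))`. -/
def cf (l : List ℕ) (x : ℝ) : ℝ := l.foldr (fun a y => 1 / (a + y)) x

/-- The (0-indexed) block index `k(j+1) - 1 = n - 1 - (j mod n)` used at step `j + 1`. -/
def blk (n : ℕ) (hn : 0 < n) (j : ℕ) : Fin n :=
  ⟨n - 1 - j % n, lt_of_le_of_lt (Nat.sub_le _ _) (Nat.sub_lt hn one_pos)⟩

/-- The sequence `(a₁, …, a_{2n}) = (p_n + p_n', q_n, …, p_1 + p_1', q_1)` as a list. -/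
def aList (n : ℕ) (hn : 0 < n) (P P' Q : Fin n → ℕ) : List ℕ :=
  (List.range n).flatMap fun i => [P (blk n hn i) + P' (blk n hn i), Q (blk n hn i)]

/-- `isH0 n hn P P' Q h0` says that `h0` is the number `h_{p,0}`: a real number in `(0,1)`
that is a fixed point of `x ↦ 1/(a₁ + 1/(a₂ + ⋯ + 1/(a_{2n} + x)))` (there is exactly one). -/
def isH0 (n : ℕ) (hn : 0 < n) (P P' Q : Fin n → ℕ) (h0 : ℝ) : Prop :=
  h0 ∈ Set.Ioo (0 : ℝ) 1 ∧ cf (aList n hn P P' Q) h0 = h0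

/-- The pair `(w_{p,j}, h_{p,j})`, with `w_{p,0} = 1`, `h_{p,0} = h0`, and for `j ≥ 1`:
`w_{p,j} = w_{p,j-1} − (p_{k(j)} + p'_{k(j)}) h_{p,j-1}`, `h_{p,j} = h_{p,j-1} − q_{k(j)} w_{p,j}`. -/
def wh (n : ℕ) (hn : 0 < n) (P P' Q : Fin n → ℕ) (h0 : ℝ) : ℕ → ℝ × ℝ
  | 0 => (1, h0)
  | j + 1 =>
    let prev := wh n hn P P' Q h0 j
    let b := blk n hn j
    let w := prev.1 - ((P b : ℝ) + (P' b : ℝ)) * prev.2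
    (w, prev.2 - (Q b : ℝ) * w)

/-- The width `w_{p,j}`. -/
def wseq (n : ℕ) (hn : 0 < n) (P P' Q : Fin n → ℕ) (h0 : ℝ) (j : ℕ) : ℝ :=
  (wh n hn P P' Q h0 j).1

/-- The height `h_{p,j}`. -/
def hseq (n : ℕ) (hn : 0 < n) (P P' Q : Fin n → ℕ) (h0 : ℝ) (j : ℕ) : ℝ :=
  (wh n hn P P' Q h0 j).2

/-- The split ratio `s_p = Σ_{i=0}^∞ p_{k(i+1)} h_{p,i}`. -/
def splitRatio (n : ℕ) (hn : 0 < n) (P P' Q : Fin n → ℕ) (h0 : ℝ) : ℝ :=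
  ∑' i : ℕ, (P (blk n hn i) : ℝ) * hseq n hn P P' Q h0 i

/-- The reindexing realizing the shift `T`: the tuple `T(p)` is given by the functions
`P ∘ shiftIdx n hn`, `P' ∘ shiftIdx n hn`, `Q ∘ shiftIdx n hn`. -/
def shiftIdx (n : ℕ) (hn : 0 < n) (i : Fin n) : Fin n :=
  ⟨(i.val + (n - 1)) % n, Nat.mod_lt _ hn⟩

open scoped ENNReal NNReal
lemma cf_nil (x : ℝ) : cf [] x = x := rfl
lemma cf_cons (a : ℕ) (l : List ℕ) (x : ℝ) : cf (a :: l) x = 1 / (a + cf l x) := rfl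
lemma cf_append (l1 l2 : List ℕ) (x : ℝ) : cf (l1 ++ l2) x = cf l1 (cf l2 x) := by
  simp [cf, List.foldr_append]

lemma cf_pos {l : List ℕ} {x : ℝ} (hx : 0 < x) : 0 < cf l x := by
  induction l with
  | nil => exact hx
  | cons a l ih =>
    rw [cf_cons]
    have : (0:ℝ) ≤ a := Nat.cast_nonneg a
    positivity

lemma cf_contract {l : List ℕ} (hl : ∀ a ∈ l, 1 ≤ a) {x y : ℝ} (hx : 0 < x) (hy : 0 < y) :
    |cf l x - cf l y| ≤ |x - y| := by
  induction l with
  | nil => simp [cf_nil]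
  | cons a l ih =>
    have h1 : (1:ℝ) ≤ a := by exact_mod_cast hl a (by simp)
    have hu := cf_pos (l := l) hx
    have hv := cf_pos (l := l) hy
    have hK : (1:ℝ) ≤ (↑a + cf l x) * (↑a + cf l y) := by nlinarith
    rw [cf_cons, cf_cons]
    have key : 1 / (↑a + cf l x) - 1 / (↑a + cf l y)
        = (cf l y - cf l x) / ((↑a + cf l x) * (↑a + cf l y)) := by
      field_simp
      ring
    rw [key, abs_div, abs_of_pos (by nlinarith : (0:ℝ) < (↑a + cf l x) * (↑a + cf l y)),
      abs_sub_comm]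
    calc |cf l x - cf l y| / ((↑a + cf l x) * (↑a + cf l y)) ≤ |cf l x - cf l y| :=
          div_le_self (abs_nonneg _) hK
      _ ≤ |x - y| := ih (fun b hb => hl b (List.mem_cons_of_mem _ hb))

lemma cf_fixed_unique {l : List ℕ} (hl : l ≠ []) (h1 : ∀ a ∈ l, 1 ≤ a) {x y : ℝ}
    (hx : 0 < x) (hy : 0 < y) (hfx : cf l x = x) (hfy : cf l y = y) : x = y := by
  cases l with
  | nil => exact absurd rfl hl
  | cons a l =>
    have ha : (1:ℝ) ≤ a := by exact_mod_cast h1 a (by simp)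
    have hu := cf_pos (l := l) hx
    have hv := cf_pos (l := l) hy
    have hK : (1:ℝ) < (↑a + cf l x) * (↑a + cf l y) := by nlinarith
    rw [cf_cons] at hfx hfy
    have key : x - y = (cf l y - cf l x) / ((↑a + cf l x) * (↑a + cf l y)) := by
      have h2 : 1 / (↑a + cf l x) - 1 / (↑a + cf l y)
          = (cf l y - cf l x) / ((↑a + cf l x) * (↑a + cf l y)) := by
        field_simp
        ring
      rw [← h2, hfx, hfy]
    have h2 : |x - y| ≤ |x - y| / ((↑a + cf l x) * (↑a + cf l y)) := by
      calc |x - y| = |cf l y - cf l x| / ((↑a + cf l x) * (↑a + cf l y)) := by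
            rw [key, abs_div, abs_of_pos (by linarith : (0:ℝ) < (↑a + cf l x) * (↑a + cf l y))]
        _ ≤ |x - y| / ((↑a + cf l x) * (↑a + cf l y)) := by
            refine div_le_div_of_nonneg_right ?_ (by linarith)
            rw [abs_sub_comm]
            exact cf_contract (fun b hb => h1 b (List.mem_cons_of_mem _ hb)) hx hy
    by_contra hne
    have habs : 0 < |x - y| := abs_pos.mpr (sub_ne_zero.mpr hne)
    have : |x - y| / ((↑a + cf l x) * (↑a + cf l y)) < |x - y| := by
      rw [div_lt_iff₀ (by linarith)]
      nlinarith
    linarith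

lemma M1_pow (p : ℕ) : M1 ^ p = !![1, (p:ℝ), 0; 0, 1, 0; 0, 0, 1] := by
  induction p with
  | zero => simp [Matrix.one_fin_three]
  | succ p ih =>
    rw [pow_succ, ih, M1, Matrix.mul_fin_three]
    push_cast
    norm_num [add_comm]

lemma M3_pow (p : ℕ) : M3 ^ p = !![1, 0, 0; 0, 1, 0; 0, (p:ℝ), 1] := by
  induction p with
  | zero => simp [Matrix.one_fin_three]
  | succ p ih =>
    rw [pow_succ, ih, M3, Matrix.mul_fin_three]
    push_cast
    norm_num [add_comm]

lemma M2_pow (q : ℕ) : M2 ^ q = !![1, 0, 0; (q:ℝ), 1, (q:ℝ); 0, 0, 1] := by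
  induction q with
  | zero => simp [Matrix.one_fin_three]
  | succ q ih =>
    rw [pow_succ, ih, M2, Matrix.mul_fin_three]
    push_cast
    norm_num [add_comm]

lemma block_eq (p p' q : ℕ) : M1 ^ p * M3 ^ p' * M2 ^ q
    = !![1 + (p:ℝ) * q, (p:ℝ), (p:ℝ) * q;
         (q:ℝ), 1, (q:ℝ);
         (p':ℝ) * q, (p':ℝ), 1 + (p':ℝ) * q] := by
  rw [M1_pow, M3_pow, M2_pow, Matrix.mul_fin_three, Matrix.mul_fin_three]
  norm_num
  ring_nf

lemma block_mulVec (p p' q : ℕ) (x h z : ℝ) :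
    (M1 ^ p * M3 ^ p' * M2 ^ q).mulVec ![x, h, z]
      = ![x + p * (h + q * (x + z)), h + q * (x + z), z + p' * (h + q * (x + z))] := by
  rw [block_eq]
  ext i
  fin_cases i <;>
    simp [Matrix.mulVec, dotProduct, Fin.sum_univ_three] <;> ring

lemma block_nonneg (p p' q : ℕ) : ∀ i j, 0 ≤ (M1 ^ p * M3 ^ p' * M2 ^ q) i j := by
  rw [block_eq]
  intro i j
  fin_cases i <;> fin_cases j <;> simp <;> positivity

section Core

variable (n : ℕ) (hn : 0 < n) (P P' Q : Fin n → ℕ) (h0 : ℝ)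

lemma wseq_zero : wseq n hn P P' Q h0 0 = 1 := rfl
lemma hseq_zero : hseq n hn P P' Q h0 0 = h0 := rfl

lemma wseq_succ (j : ℕ) : wseq n hn P P' Q h0 (j+1)
    = wseq n hn P P' Q h0 j
      - ((P (blk n hn j) : ℝ) + (P' (blk n hn j) : ℝ)) * hseq n hn P P' Q h0 j := rfl

lemma hseq_succ (j : ℕ) : hseq n hn P P' Q h0 (j+1)
    = hseq n hn P P' Q h0 j - (Q (blk n hn j) : ℝ) * wseq n hn P P' Q h0 (j+1) := rfl

/-- The tail values of the periodic continued fraction. -/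
def tl (j : ℕ) : ℝ :=
  cf ((List.range' j (n - j)).flatMap
    fun i => [P (blk n hn i) + P' (blk n hn i), Q (blk n hn i)]) h0

lemma tl_n : tl n hn P P' Q h0 n = h0 := by
  simp [tl, Nat.sub_self, cf_nil]

lemma tl_zero (hfix : cf (aList n hn P P' Q) h0 = h0) : tl n hn P P' Q h0 0 = h0 := by
  rw [tl, Nat.sub_zero, ← List.range_eq_range', ← aList, hfix]

lemma tl_succ {j : ℕ} (hj : j < n) :
    tl n hn P P' Q h0 j
      = 1 / (((P (blk n hn j) : ℝ) + (P' (blk n hn j) : ℝ))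
          + 1 / ((Q (blk n hn j) : ℝ) + tl n hn P P' Q h0 (j+1))) := by
  have h1 : n - j = (n - (j+1)) + 1 := by omega
  rw [tl, h1, List.range'_succ, List.flatMap_cons, cf_append, cf_cons, cf_cons]
  push_cast
  rfl

lemma tl_bounds (hmem : memI n P P' Q) (hIoo : h0 ∈ Set.Ioo (0:ℝ) 1) :
    ∀ d j, j + d = n → 0 < tl n hn P P' Q h0 j ∧ tl n hn P P' Q h0 j ≤ 1
      ∧ (j < n → tl n hn P P' Q h0 j < 1) := by
  intro d
  induction d with
  | zero =>
    intro j hj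
    have : j = n := by omega
    subst this
    rw [tl_n]
    exact ⟨hIoo.1, le_of_lt hIoo.2, fun h => absurd h (lt_irrefl _)⟩
  | succ d ih =>
    intro j hj
    have hjn : j < n := by omega
    obtain ⟨ht0, ht1, -⟩ := ih (j+1) (by omega)
    set b := blk n hn j
    have ha : (1:ℝ) ≤ (P b : ℝ) + (P' b : ℝ) := by
      have := hmem.2.1 b
      push_cast
      exact_mod_cast Nat.one_le_cast.mpr this
    have hq : (1:ℝ) ≤ (Q b : ℝ) := Nat.one_le_cast.mpr (hmem.1 b)
    rw [tl_succ n hn P P' Q h0 hjn]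
    have hm : 0 < 1 / ((Q b : ℝ) + tl n hn P P' Q h0 (j+1)) := by positivity
    constructor
    · positivity
    constructor
    · rw [div_le_one (by linarith)]; linarith
    · intro _
      rw [div_lt_one (by linarith)]; linarith

lemma tl_pos (hmem : memI n P P' Q) (hIoo : h0 ∈ Set.Ioo (0:ℝ) 1) {j : ℕ} (hj : j ≤ n) :
    0 < tl n hn P P' Q h0 j :=
  (tl_bounds n hn P P' Q h0 hmem hIoo (n - j) j (by omega)).1

lemma wh_main (hmem : memI n P P' Q) (hIoo : h0 ∈ Set.Ioo (0:ℝ) 1)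
    (hfix : cf (aList n hn P P' Q) h0 = h0) :
    ∀ j ≤ n, 0 < wseq n hn P P' Q h0 j
      ∧ hseq n hn P P' Q h0 j = wseq n hn P P' Q h0 j * tl n hn P P' Q h0 j
      ∧ wseq n hn P P' Q h0 j ≤ 1 ∧ (0 < j → wseq n hn P P' Q h0 j < 1) := by
  intro j
  induction j with
  | zero =>
    intro _
    refine ⟨one_pos, ?_, le_refl 1, fun h => absurd h (lt_irrefl 0)⟩
    rw [wseq_zero, hseq_zero, tl_zero n hn P P' Q h0 hfix, one_mul]
  | succ j ih =>
    intro hj1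
    have hjn : j < n := by omega
    obtain ⟨hW, hH, hW1, -⟩ := ih (le_of_lt hjn)
    set b := blk n hn j with hb
    set W := wseq n hn P P' Q h0 j
    set t := tl n hn P P' Q h0 j with htdef
    set t1 := tl n hn P P' Q h0 (j+1) with ht1def
    have ht1 : 0 < t1 := tl_pos n hn P P' Q h0 hmem hIoo (by omega)
    have ha : (1:ℝ) ≤ (P b : ℝ) + (P' b : ℝ) := by
      have := hmem.2.1 b
      exact_mod_cast Nat.one_le_cast.mpr this
    have hq : (1:ℝ) ≤ (Q b : ℝ) := Nat.one_le_cast.mpr (hmem.1 b)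
    set a := (P b : ℝ) + (P' b : ℝ)
    set q := (Q b : ℝ)
    have hqt : 0 < q + t1 := by linarith
    set m : ℝ := 1 / (q + t1) with hmdef
    have hm : 0 < m := by positivity
    have hm1 : m < 1 := by rw [hmdef, div_lt_one hqt]; linarith
    have htm : t = 1 / (a + m) := tl_succ n hn P P' Q h0 hjn
    have ham : 0 < a + m := by linarith
    have ht : 0 < t := by rw [htm]; positivity
    have ht1' : t < 1 := by rw [htm, div_lt_one ham]; linarith
    -- key algebraic identities
    have hat : 1 - a * t = m * t := by
      rw [htm]; field_simp; ring
    have hqm : 1 - q * m = t1 * m := by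
      rw [hmdef]; field_simp; ring
    have hWsucc : wseq n hn P P' Q h0 (j+1) = W * (m * t) := by
      rw [wseq_succ, hH]
      show W - a * (W * t) = W * (m * t)
      linear_combination W * hat
    have hWpos : 0 < wseq n hn P P' Q h0 (j+1) := by rw [hWsucc]; positivity
    have hHsucc : hseq n hn P P' Q h0 (j+1) = wseq n hn P P' Q h0 (j+1) * t1 := by
      rw [hseq_succ, hH, hWsucc]
      show W * t - q * (W * (m * t)) = W * (m * t) * t1
      linear_combination (W * t) * hqm
    have hmt1 : m * t < 1 := by nlinarith
    refine ⟨hWpos, hHsucc, ?_, ?_⟩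
    · rw [hWsucc]; nlinarith
    · intro _; rw [hWsucc]; nlinarith

end Core

section Eig

variable (n : ℕ) (hn : 0 < n) (P P' Q : Fin n → ℕ) (h0 : ℝ)

/-- Partial sums appearing in the first coordinate of the Perron eigenvector. -/
def vvX (W : Fin n → ℕ) (i : ℕ) : ℝ :=
  ∑ m ∈ Finset.range i, (W (blk n hn (n-1-m)) : ℝ) * hseq n hn P P' Q h0 (n-1-m)

/-- The candidate eigenvector family. -/
def vvec (x0 z0 : ℝ) (i : ℕ) : Fin 3 → ℝ :=
  ![x0 + vvX n hn P P' Q h0 P i, hseq n hn P P' Q h0 (n-i), z0 + vvX n hn P P' Q h0 P' i]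

lemma vv_telescope : ∀ i ≤ n,
    vvX n hn P P' Q h0 P i + vvX n hn P P' Q h0 P' i
      = wseq n hn P P' Q h0 (n-i) - wseq n hn P P' Q h0 n := by
  intro i
  induction i with
  | zero => simp [vvX]
  | succ i ih =>
    intro hi
    have h1 := ih (by omega)
    rw [vvX, vvX, Finset.sum_range_succ, Finset.sum_range_succ]
    rw [vvX, vvX] at h1
    have e1 : n - i = (n-1-i) + 1 := by omega
    have e2 : n - (i+1) = n-1-i := by omega
    rw [e2]
    rw [e1, wseq_succ] at h1
    linarith [h1]

lemma vv_step (x0 z0 : ℝ) (hx : x0 + z0 = wseq n hn P P' Q h0 n) {i : ℕ} (hi : i < n) :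
    (M1 ^ P (blk n hn (n-1-i)) * M3 ^ P' (blk n hn (n-1-i))
        * M2 ^ Q (blk n hn (n-1-i))).mulVec (vvec n hn P P' Q h0 x0 z0 i)
      = vvec n hn P P' Q h0 x0 z0 (i+1) := by
  set b := blk n hn (n-1-i) with hb
  have key : hseq n hn P P' Q h0 (n-i)
      + (Q b : ℝ) * ((x0 + vvX n hn P P' Q h0 P i) + (z0 + vvX n hn P P' Q h0 P' i))
      = hseq n hn P P' Q h0 (n-1-i) := by
    have htel := vv_telescope n hn P P' Q h0 i (by omega)
    have e1 : n - i = (n-1-i) + 1 := by omega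
    have hs : hseq n hn P P' Q h0 ((n-1-i)+1)
        = hseq n hn P P' Q h0 (n-1-i)
          - (Q b : ℝ) * wseq n hn P P' Q h0 ((n-1-i)+1) := hseq_succ ..
    rw [e1, hs, ← e1]
    have h4 : (x0 + vvX n hn P P' Q h0 P i) + (z0 + vvX n hn P P' Q h0 P' i)
        = wseq n hn P P' Q h0 (n-i) := by linarith [htel]
    rw [h4]
    ring
  have vvX_succ : ∀ W : Fin n → ℕ, vvX n hn P P' Q h0 W (i+1)
      = vvX n hn P P' Q h0 W i
        + (W (blk n hn (n-1-i)) : ℝ) * hseq n hn P P' Q h0 (n-1-i) := by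
    intro W
    simp [vvX, Finset.sum_range_succ]
  rw [vvec, block_mulVec, vvec]
  have e2 : n - (i+1) = n-1-i := by omega
  rw [e2, key]
  have c1 : x0 + vvX n hn P P' Q h0 P i + (P b : ℝ) * hseq n hn P P' Q h0 (n-1-i)
      = x0 + vvX n hn P P' Q h0 P (i+1) := by rw [vvX_succ]; ring
  have c3 : z0 + vvX n hn P P' Q h0 P' i + (P' b : ℝ) * hseq n hn P P' Q h0 (n-1-i)
      = z0 + vvX n hn P P' Q h0 P' (i+1) := by rw [vvX_succ]; ring
  rw [c1, c3]

lemma vv_prod (x0 z0 : ℝ) (hx : x0 + z0 = wseq n hn P P' Q h0 n) : ∀ i ≤ n,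
    ((((List.finRange n).map fun i => M1 ^ P i.rev * M3 ^ P' i.rev * M2 ^ Q i.rev).drop
        (n - i)).prod).mulVec (vvec n hn P P' Q h0 x0 z0 0)
      = vvec n hn P P' Q h0 x0 z0 i := by
  intro i
  induction i with
  | zero =>
    intro _
    have hlen : ((List.finRange n).map fun i : Fin n =>
        M1 ^ P i.rev * M3 ^ P' i.rev * M2 ^ Q i.rev).length = n := by simp
    have hnil : ((List.finRange n).map fun i : Fin n =>
        M1 ^ P i.rev * M3 ^ P' i.rev * M2 ^ Q i.rev).drop n = [] := by
      exact List.drop_eq_nil_of_le (le_of_eq hlen)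
    rw [Nat.sub_zero, hnil, List.prod_nil, Matrix.one_mulVec]
  | succ i ih =>
    intro hi
    have hk : n - (i+1) < ((List.finRange n).map fun i : Fin n =>
        M1 ^ P i.rev * M3 ^ P' i.rev * M2 ^ Q i.rev).length := by simp; omega
    rw [List.drop_eq_getElem_cons hk, List.prod_cons]
    have e3 : n - (i+1) + 1 = n - i := by omega
    rw [e3, ← Matrix.mulVec_mulVec, ih (by omega)]
    have hget : ((List.finRange n).map fun i : Fin n =>
        M1 ^ P i.rev * M3 ^ P' i.rev * M2 ^ Q i.rev)[n-(i+1)]'hk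
        = M1 ^ P (blk n hn (n-1-i)) * M3 ^ P' (blk n hn (n-1-i))
            * M2 ^ Q (blk n hn (n-1-i)) := by
      simp only [List.getElem_map, List.getElem_finRange]
      have : (Fin.cast (List.length_finRange (n := n)) ⟨n-(i+1), by simpa using hk⟩ : Fin n).rev
          = blk n hn (n-1-i) := by
        apply Fin.ext
        simp only [Fin.val_rev, Fin.coe_cast, blk]
        rw [Nat.mod_eq_of_lt (by omega : n - 1 - i < n)]
        omega
      rw [this]
    rw [hget, vv_step n hn P P' Q h0 x0 z0 hx (by omega)]

lemma Mp_mulVec_vv (x0 z0 : ℝ) (hx : x0 + z0 = wseq n hn P P' Q h0 n) :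
    (Mp n P P' Q).mulVec (vvec n hn P P' Q h0 x0 z0 0) = vvec n hn P P' Q h0 x0 z0 n := by
  have := vv_prod n hn P P' Q h0 x0 z0 hx n (le_refl n)
  rwa [Nat.sub_self, List.drop_zero] at this

end Eig



lemma spectralRadius_eq_of_perron (A : Matrix (Fin 3) (Fin 3) ℝ)
    (hA : ∀ i j, 0 ≤ A i j) (v : Fin 3 → ℝ) (hv : ∀ i, 0 < v i) (lam : ℝ) (hlam : 0 ≤ lam)
    (heig : A.mulVec v = lam • v) :
    spectralRadius ℂ (A.map (fun x => (x : ℂ))) = ENNReal.ofReal lam := by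
  set B := A.map (fun x => (x : ℂ)) with hB
  have hmulmap : ∀ w : Fin 3 → ℝ, B.mulVec (fun i => (w i : ℂ)) = fun i => ((A.mulVec w i : ℝ) : ℂ) := by
    intro w
    funext i
    simp [Matrix.mulVec, dotProduct, hB, Matrix.map_apply]
  -- lam is in the spectrum
  have hmem : (lam : ℂ) ∈ spectrum ℂ B := by
    rw [spectrum.mem_iff, Matrix.isUnit_iff_isUnit_det, isUnit_iff_ne_zero]
    intro hdet
    have hzero : (∃ w ≠ 0, (algebraMap ℂ (Matrix (Fin 3) (Fin 3) ℂ) (lam:ℂ) - B).mulVec w = 0) := by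
      refine ⟨fun i => (v i : ℂ), ?_, ?_⟩
      · intro h
        have := congrFun h 0
        simp at this
        exact absurd this (ne_of_gt (hv 0))
      · rw [Algebra.algebraMap_eq_smul_one, Matrix.sub_mulVec, smul_mulVec,
          Matrix.one_mulVec, hmulmap, heig]
        funext i
        simp
    rw [Matrix.exists_mulVec_eq_zero_iff] at hzero
    exact hdet hzero
  -- all spectrum elements bounded by lam
  have hbdd : ∀ μ ∈ spectrum ℂ B, ‖μ‖ ≤ lam := by
    intro μ hμ
    rw [spectrum.mem_iff, Matrix.isUnit_iff_isUnit_det, isUnit_iff_ne_zero] at hμ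
    push_neg at hμ
    have hdetT : ((algebraMap ℂ (Matrix (Fin 3) (Fin 3) ℂ) μ - B).transpose).det = 0 := by
      rw [Matrix.det_transpose]; exact hμ
    rw [← Matrix.exists_mulVec_eq_zero_iff] at hdetT
    obtain ⟨y, hy0, hy⟩ := hdetT
    have hcol : ∀ j, ∑ i, (A i j : ℂ) * y i = μ * y j := by
      intro j
      have h2 := congrFun hy j
      rw [Matrix.mulVec] at h2
      simp only [dotProduct, Matrix.transpose_apply, Matrix.sub_apply,
        Algebra.algebraMap_eq_smul_one, Matrix.smul_apply, Matrix.one_apply, hB,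
        Matrix.map_apply, Pi.zero_apply, smul_eq_mul, sub_mul, mul_ite, mul_one, mul_zero,
        ite_mul, zero_mul, Finset.sum_sub_distrib, Finset.sum_ite_eq', Finset.mem_univ,
        if_true] at h2
      exact (sub_eq_zero.mp h2).symm
    have hterm : ∀ j, ‖μ‖ * ‖y j‖ ≤ ∑ i, A i j * ‖y i‖ := by
      intro j
      calc ‖μ‖ * ‖y j‖ = ‖μ * y j‖ := (norm_mul μ (y j)).symm
        _ = ‖∑ i, (A i j : ℂ) * y i‖ := by rw [hcol]
        _ ≤ ∑ i, ‖(A i j : ℂ) * y i‖ := norm_sum_le _ _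
        _ = ∑ i, A i j * ‖y i‖ := by
            refine Finset.sum_congr rfl fun i _ => ?_
            rw [norm_mul, Complex.norm_real, Real.norm_eq_abs, abs_of_nonneg (hA i j)]
    set S := ∑ i, ‖y i‖ * v i with hSdef
    have hS : 0 < S := by
      obtain ⟨i0, hi0⟩ : ∃ i, y i ≠ 0 := by
        by_contra hc
        push_neg at hc
        exact hy0 (funext fun i => hc i)
      have hn0 : 0 < ‖y i0‖ := norm_pos_iff.mpr hi0
      refine Finset.sum_pos' (fun i _ => mul_nonneg (norm_nonneg _) (le_of_lt (hv i)))
        ⟨i0, Finset.mem_univ _, mul_pos hn0 (hv i0)⟩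
    have hmain : ‖μ‖ * S ≤ lam * S := by
      have hstep1 : ‖μ‖ * S = ∑ j, (‖μ‖ * ‖y j‖) * v j := by
        rw [hSdef, Finset.mul_sum]
        exact Finset.sum_congr rfl fun j _ => by ring
      have hstep2 : ∑ j, (‖μ‖ * ‖y j‖) * v j ≤ ∑ j, (∑ i, A i j * ‖y i‖) * v j := by
        refine Finset.sum_le_sum fun j _ => ?_
        exact mul_le_mul_of_nonneg_right (hterm j) (le_of_lt (hv j))
      have hstep3 : ∑ j, (∑ i, A i j * ‖y i‖) * v j = ∑ i, ‖y i‖ * (lam * v i) := by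
        calc ∑ j, (∑ i, A i j * ‖y i‖) * v j
            = ∑ j, ∑ i, A i j * ‖y i‖ * v j := by
              refine Finset.sum_congr rfl fun j _ => ?_
              rw [Finset.sum_mul]
          _ = ∑ i, ∑ j, A i j * ‖y i‖ * v j := Finset.sum_comm
          _ = ∑ i, ‖y i‖ * (A.mulVec v i) := by
              refine Finset.sum_congr rfl fun i _ => ?_
              rw [Matrix.mulVec, dotProduct, Finset.mul_sum]
              exact Finset.sum_congr rfl fun j _ => by ring
          _ = ∑ i, ‖y i‖ * (lam * v i) := by
              refine Finset.sum_congr rfl fun i _ => ?_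
              rw [heig]
              simp
      have hstep4 : ∑ i, ‖y i‖ * (lam * v i) = lam * S := by
        rw [hSdef, Finset.mul_sum]
        exact Finset.sum_congr rfl fun i _ => by ring
      rw [hstep1, ← hstep4, ← hstep3]
      exact hstep2
    exact le_of_mul_le_mul_right hmain hS
  -- conclude
  apply le_antisymm
  · refine iSup₂_le fun k hk => ?_
    rw [← enorm_eq_nnnorm, ← ofReal_norm]
    exact ENNReal.ofReal_le_ofReal (hbdd k hk)
  · have h1 : (‖(lam:ℂ)‖₊ : ℝ≥0∞) ≤ spectralRadius ℂ B :=
      le_iSup₂ (f := fun k (_ : k ∈ spectrum ℂ B) => (‖k‖₊ : ℝ≥0∞)) (lam : ℂ) hmem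
    calc ENNReal.ofReal lam = (‖(lam:ℂ)‖₊ : ℝ≥0∞) := by
          rw [← enorm_eq_nnnorm, ← ofReal_norm, Complex.norm_real, Real.norm_eq_abs,
            abs_of_nonneg hlam]
      _ ≤ _ := h1



lemma list_prod_nonneg : ∀ l : List (Matrix (Fin 3) (Fin 3) ℝ),
    (∀ A ∈ l, ∀ i j, 0 ≤ A i j) → ∀ i j, 0 ≤ l.prod i j := by
  intro l
  induction l with
  | nil =>
    intro _ i j
    rw [List.prod_nil]
    by_cases h : i = j <;> simp [Matrix.one_apply, h]
  | cons a l ih =>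
    intro hmem i j
    rw [List.prod_cons, Matrix.mul_apply]
    refine Finset.sum_nonneg fun k _ => mul_nonneg ?_ ?_
    · exact hmem a (List.mem_cons_self) i k
    · exact ih (fun A hA => hmem A (List.mem_cons_of_mem _ hA)) k j

lemma Mp_nonneg (n : ℕ) (P P' Q : Fin n → ℕ) : ∀ i j, 0 ≤ Mp n P P' Q i j := by
  refine list_prod_nonneg _ fun A hA i j => ?_
  obtain ⟨b, -, rfl⟩ := List.mem_map.mp hA
  exact block_nonneg _ _ _ i j

lemma aList_entries {n : ℕ} (hn : 0 < n) {P P' Q : Fin n → ℕ} (hmem : memI n P P' Q) :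
    ∀ a ∈ aList n hn P P' Q, 1 ≤ a := by
  intro a ha
  obtain ⟨i, -, hi⟩ := List.mem_flatMap.mp ha
  simp only [List.mem_cons, List.mem_singleton, List.not_mem_nil, or_false] at hi
  rcases hi with rfl | rfl
  · exact hmem.2.1 _
  · exact hmem.1 _

lemma aList_ne_nil {n : ℕ} (hn : 0 < n) (P P' Q : Fin n → ℕ) : aList n hn P P' Q ≠ [] := by
  refine List.ne_nil_of_mem (a := P (blk n hn 0) + P' (blk n hn 0)) ?_
  exact List.mem_flatMap.mpr ⟨0, List.mem_range.mpr hn, by simp⟩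

lemma vvX_pos {n : ℕ} (hn : 0 < n) {P P' Q : Fin n → ℕ} (h0 : ℝ) {W : Fin n → ℕ}
    (hmem : memI n P P' Q) (hIoo : h0 ∈ Set.Ioo (0:ℝ) 1)
    (hfix : cf (aList n hn P P' Q) h0 = h0) (hW : ∃ j, 0 < W j) :
    0 < vvX n hn P P' Q h0 W n := by
  obtain ⟨j, hj⟩ := hW
  have hpos : ∀ m, m < n → 0 < hseq n hn P P' Q h0 m := by
    intro m hm
    obtain ⟨hw, hh, -, -⟩ := wh_main n hn P P' Q h0 hmem hIoo hfix m (le_of_lt hm)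
    rw [hh]
    exact mul_pos hw (tl_pos n hn P P' Q h0 hmem hIoo (le_of_lt hm))
  rw [vvX]
  refine Finset.sum_pos' (fun m hm => ?_) ⟨j.val, Finset.mem_range.mpr j.isLt, ?_⟩
  · rw [Finset.mem_range] at hm
    exact mul_nonneg (Nat.cast_nonneg _) (le_of_lt (hpos _ (by omega)))
  · have hblk : blk n hn (n - 1 - j.val) = j := by
      apply Fin.ext
      have h1 : n - 1 - j.val < n := by omega
      simp only [blk, Nat.mod_eq_of_lt h1]
      omega
    rw [hblk]
    have h2 : n - 1 - j.val < n := by omega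
    exact mul_pos (by exact_mod_cast hj) (hpos _ h2)

lemma Mp_spectral {n : ℕ} (hn : 0 < n) {P P' Q : Fin n → ℕ} {h0 : ℝ}
    (hmem : memI n P P' Q) (hh0 : isH0 n hn P P' Q h0) :
    spectralRadius ℂ ((Mp n P P' Q).map (fun x => (x : ℂ)))
      = ENNReal.ofReal (1 / wseq n hn P P' Q h0 n) := by
  obtain ⟨hIoo, hfix⟩ := hh0
  obtain ⟨hWn, hHn, -, hWn1⟩ := wh_main n hn P P' Q h0 hmem hIoo hfix n (le_refl n)
  have hWn1' : wseq n hn P P' Q h0 n < 1 := hWn1 hn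
  set Wn := wseq n hn P P' Q h0 n with hWndef
  have h1W : (0:ℝ) < 1 - Wn := by linarith
  set c : ℝ := Wn / (1 - Wn) with hcdef
  have hc : 0 < c := div_pos hWn h1W
  set D := vvX n hn P P' Q h0 P n with hDdef
  set D' := vvX n hn P P' Q h0 P' n with hD'def
  have hD : 0 < D := vvX_pos hn h0 hmem hIoo hfix hmem.2.2.1
  have hD' : 0 < D' := vvX_pos hn h0 hmem hIoo hfix hmem.2.2.2
  have htel : D + D' = 1 - Wn := by
    have := vv_telescope n hn P P' Q h0 n (le_refl n)
    rw [Nat.sub_self, wseq_zero] at this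
    rw [hDdef, hD'def]
    linarith [this]
  set x0 := c * D with hx0def
  set z0 := c * D' with hz0def
  have hx : x0 + z0 = Wn := by
    rw [hx0def, hz0def, hcdef]
    field_simp
    nlinarith [htel]
  have hHn0 : hseq n hn P P' Q h0 n = Wn * h0 := by
    rw [hHn, tl_n]
  have hHnpos : 0 < hseq n hn P P' Q h0 n := by
    rw [hHn0]; exact mul_pos hWn hIoo.1
  have hveig : (Mp n P P' Q).mulVec (vvec n hn P P' Q h0 x0 z0 0)
      = (1 / Wn) • vvec n hn P P' Q h0 x0 z0 0 := by
    rw [Mp_mulVec_vv n hn P P' Q h0 x0 z0 hx]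
    funext k
    fin_cases k
    · show x0 + vvX n hn P P' Q h0 P n = (1 / Wn) * (x0 + vvX n hn P P' Q h0 P 0)
      have h0X : vvX n hn P P' Q h0 P 0 = 0 := by simp [vvX]
      rw [h0X, ← hDdef, hx0def, hcdef]
      field_simp
      ring
    · show hseq n hn P P' Q h0 (n - n) = (1 / Wn) * hseq n hn P P' Q h0 (n - 0)
      rw [Nat.sub_self, Nat.sub_zero, hseq_zero, hHn0]
      field_simp
    · show z0 + vvX n hn P P' Q h0 P' n = (1 / Wn) * (z0 + vvX n hn P P' Q h0 P' 0)
      have h0X : vvX n hn P P' Q h0 P' 0 = 0 := by simp [vvX]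
      rw [h0X, ← hD'def, hz0def, hcdef]
      field_simp
      ring
  refine spectralRadius_eq_of_perron _ (Mp_nonneg n P P' Q) _ ?_ _ ?_ hveig
  · intro i
    fin_cases i
    · show 0 < x0 + vvX n hn P P' Q h0 P 0
      have h0X : vvX n hn P P' Q h0 P 0 = 0 := by simp [vvX]
      rw [h0X, add_zero, hx0def]
      exact mul_pos hc hD
    · show 0 < hseq n hn P P' Q h0 (n - 0)
      rw [Nat.sub_zero]
      exact hHnpos
    · show 0 < z0 + vvX n hn P P' Q h0 P' 0
      have h0X : vvX n hn P P' Q h0 P' 0 = 0 := by simp [vvX]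
      rw [h0X, add_zero, hz0def]
      exact mul_pos hc hD'
  · positivity

/-- if `p, t ∈ I_n` satisfy `p_i + p_i' = t_i + t_i'` and `q_i = u_i` for all
`i`, then `w_{p,j} = w_{t,j}` and `h_{p,j} = h_{t,j}` for all `j`, and the spectral radii
of `M_p` and `M_t` coincide, both equal to `1/w_{p,n}`. -/
theorem stmt9 (n : ℕ) (hn : 0 < n) (P P' Q R R' U : Fin n → ℕ)
    (hP : memI n P P' Q) (hT : memI n R R' U)
    (hsum : ∀ i, P i + P' i = R i + R' i) (hq : ∀ i, Q i = U i)
    (h0p h0t : ℝ) (hh0p : isH0 n hn P P' Q h0p) (hh0t : isH0 n hn R R' U h0t) :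
    (∀ j : ℕ,
      wseq n hn P P' Q h0p j = wseq n hn R R' U h0t j ∧
      hseq n hn P P' Q h0p j = hseq n hn R R' U h0t j) ∧
    spectralRadius ℂ ((Mp n P P' Q).map (fun x => (x : ℂ)))
      = spectralRadius ℂ ((Mp n R R' U).map (fun x => (x : ℂ))) ∧
    spectralRadius ℂ ((Mp n P P' Q).map (fun x => (x : ℂ)))
      = ENNReal.ofReal (1 / wseq n hn P P' Q h0p n) := by
  have haL : aList n hn P P' Q = aList n hn R R' U := by
    have hfun : (fun i => [P (blk n hn i) + P' (blk n hn i), Q (blk n hn i)])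
        = (fun i => [R (blk n hn i) + R' (blk n hn i), U (blk n hn i)]) := by
      funext i
      rw [hsum (blk n hn i), hq (blk n hn i)]
    rw [aList, aList, hfun]
  have h00 : h0p = h0t :=
    cf_fixed_unique (aList_ne_nil hn P P' Q) (aList_entries hn hP) hh0p.1.1 hh0t.1.1
      hh0p.2 (by rw [haL]; exact hh0t.2)
  have hwh : ∀ j : ℕ, wh n hn P P' Q h0p j = wh n hn R R' U h0t j := by
    intro j
    induction j with
    | zero => rw [wh, wh, h00]
    | succ j ih =>
      rw [wh, wh, ih]
      have e1 : ((P (blk n hn j) : ℝ) + (P' (blk n hn j) : ℝ))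
          = ((R (blk n hn j) : ℝ) + (R' (blk n hn j) : ℝ)) := by
        have := hsum (blk n hn j)
        exact_mod_cast this
      rw [e1, hq (blk n hn j)]
  have hwseq : ∀ j, wseq n hn P P' Q h0p j = wseq n hn R R' U h0t j :=
    fun j => by rw [wseq, wseq, hwh j]
  have hhseq : ∀ j, hseq n hn P P' Q h0p j = hseq n hn R R' U h0t j :=
    fun j => by rw [hseq, hseq, hwh j]
  refine ⟨fun j => ⟨hwseq j, hhseq j⟩, ?_, ?_⟩
  · rw [Mp_spectral hn hP hh0p, Mp_spectral hn hT hh0t, hwseq n]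
  · exact Mp_spectral hn hP hh0p
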